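/- Let l > 0 be a real number and let k : ℝ → ℝ be a continuous function that vanishes outside a compact subset of [0, ∞). Then ∫_0^2 k( arcosh(1 + l²/(2y²)) ) · y^{−2} dy = (1/(√2 · l)) · ∫_{arcosh(1 + l²/8)}^{∞} k(ρ) · sinh(ρ) / √(cosh(ρ) − 1) dρ. -/

import Mathlib

open MeasureTheory Real Set

/-- The inverse hyperbolic cosine, `arcosh x = log (x + √(x² - 1))` for `x ≥ 1`. -/
noncomputable def arcosh (x : ℝ) : ℝ := Real.log (x + Real.sqrt (x ^ 2 - 1))

lemma arcosh_nonneg {x : ℝ} (hx : 1 ≤ x) : 0 ≤ _root_.arcosh x := by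
  apply Real.log_nonneg
  have := Real.sqrt_nonneg (x ^ 2 - 1)
  linarith

lemma arcosh_pos {x : ℝ} (hx : 1 < x) : 0 < _root_.arcosh x := by
  apply Real.log_pos
  have := Real.sqrt_nonneg (x ^ 2 - 1)
  linarith

lemma cosh_arcosh {x : ℝ} (hx : 1 ≤ x) : Real.cosh (_root_.arcosh x) = x := by
  have hs0 : 0 ≤ Real.sqrt (x ^ 2 - 1) := Real.sqrt_nonneg _
  have hs : Real.sqrt (x ^ 2 - 1) ^ 2 = x ^ 2 - 1 := Real.sq_sqrt (by nlinarith)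
  have ht : 0 < x + Real.sqrt (x ^ 2 - 1) := by linarith
  have hinv : (x + Real.sqrt (x ^ 2 - 1))⁻¹ = x - Real.sqrt (x ^ 2 - 1) := by
    apply inv_eq_of_mul_eq_one_right
    nlinarith
  rw [_root_.arcosh, Real.cosh_eq, Real.exp_log ht, Real.exp_neg, Real.exp_log ht, hinv]
  ring

lemma arcosh_cosh {x : ℝ} (hx : 0 ≤ x) : _root_.arcosh (Real.cosh x) = x := by
  have h1 : Real.cosh x ^ 2 - 1 = Real.sinh x ^ 2 := by
    have := Real.cosh_sq x; linarith
  rw [_root_.arcosh, h1, Real.sqrt_sq (by rwa [Real.sinh_nonneg_iff]), Real.cosh_add_sinh,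
    Real.log_exp]

lemma continuousAt_arcosh_comp {l y : ℝ} (hl : 0 < l) (hy : 0 < y) :
    ContinuousAt (fun y : ℝ => _root_.arcosh (1 + l ^ 2 / (2 * y ^ 2))) y := by
  have hinner : ContinuousAt (fun y : ℝ => 1 + l ^ 2 / (2 * y ^ 2)) y := by
    apply ContinuousAt.add continuousAt_const
    exact ContinuousAt.div continuousAt_const (by fun_prop) (by positivity)
  have hx1 : (1:ℝ) ≤ 1 + l ^ 2 / (2 * y ^ 2) := by
    have : 0 ≤ l ^ 2 / (2 * y ^ 2) := by positivity
    linarith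
  have houter : ContinuousAt (fun x : ℝ => Real.log (x + Real.sqrt (x ^ 2 - 1)))
      (1 + l ^ 2 / (2 * y ^ 2)) := by
    apply ContinuousAt.log
    · exact continuousAt_id.add ((Real.continuous_sqrt.continuousAt).comp (by fun_prop))
    · have := Real.sqrt_nonneg ((1 + l ^ 2 / (2 * y ^ 2)) ^ 2 - 1)
      intro h
      nlinarith
  exact ContinuousAt.comp (g := fun x : ℝ => Real.log (x + Real.sqrt (x ^ 2 - 1)))
    houter hinner

theorem parabolic_change_of_variables (l : ℝ) (hl : 0 < l)
    (k : ℝ → ℝ) (hk : Continuous k)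
    (hsupp : ∃ K : Set ℝ, IsCompact K ∧ K ⊆ Set.Ici (0 : ℝ) ∧ ∀ x ∉ K, k x = 0) :
    (∫ y in (0 : ℝ)..2, k (_root_.arcosh (1 + l ^ 2 / (2 * y ^ 2))) * y ^ (-2 : ℤ)) =
      (1 / (Real.sqrt 2 * l)) *
        ∫ ρ in Set.Ioi (_root_.arcosh (1 + l ^ 2 / 8)),
          k ρ * Real.sinh ρ / Real.sqrt (Real.cosh ρ - 1) := by
  obtain ⟨K, hKc, -, hKz⟩ := hsupp
  obtain ⟨M, hM⟩ := hKc.bddAbove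
  set f : ℝ → ℝ := fun y => k (_root_.arcosh (1 + l ^ 2 / (2 * y ^ 2))) * y ^ (-2 : ℤ) with hf
  set F : ℝ → ℝ := fun ρ => k ρ * Real.sinh ρ / Real.sqrt (Real.cosh ρ - 1) with hF
  set ρ₀ : ℝ := _root_.arcosh (1 + l ^ 2 / 8) with hρ₀
  have hl2 : (0:ℝ) < l ^ 2 := by positivity
  have h18 : (1:ℝ) < 1 + l ^ 2 / 8 := by nlinarith
  have hρ₀pos : 0 < ρ₀ := _root_.arcosh_pos h18
  set R : ℝ := max M ρ₀ + 1 with hR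
  have hρ₀R : ρ₀ < R := by
    have := le_max_right M ρ₀; simp only [hR]; linarith
  have hRpos : 0 < R := lt_trans hρ₀pos hρ₀R
  have hkR : ∀ x, R ≤ x → k x = 0 := by
    intro x hx
    apply hKz
    intro hxK
    have h1 := hM hxK
    have h2 : M ≤ max M ρ₀ := le_max_left _ _
    simp only [hR] at hx
    linarith
  have hcρ₀ : Real.cosh ρ₀ = 1 + l ^ 2 / 8 := _root_.cosh_arcosh h18.le
  have hu : ∀ ρ : ℝ, 0 < ρ → 0 < 2 * Real.cosh ρ - 2 := by
    intro ρ hρ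
    have := Real.one_lt_cosh.2 (ne_of_gt hρ)
    linarith
  set ψ : ℝ → ℝ := fun ρ => l / Real.sqrt (2 * Real.cosh ρ - 2) with hψ
  have hψpos : ∀ ρ : ℝ, 0 < ρ → 0 < ψ ρ :=
    fun ρ hρ => div_pos hl (Real.sqrt_pos.2 (hu ρ hρ))
  have hψsq : ∀ ρ : ℝ, 0 < ρ → (ψ ρ) ^ 2 = l ^ 2 / (2 * Real.cosh ρ - 2) := by
    intro ρ hρ
    simp only [hψ]
    rw [div_pow, Real.sq_sqrt (hu ρ hρ).le]
  have hψρ₀ : ψ ρ₀ = 2 := by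
    have h4 : 2 * Real.cosh ρ₀ - 2 = (l / 2) ^ 2 := by rw [hcρ₀]; ring
    simp only [hψ]
    rw [h4, Real.sqrt_sq (by positivity)]
    field_simp
  set yR : ℝ := ψ R with hyR
  have hyRpos : 0 < yR := hψpos R hRpos
  have hcosh_mono : ∀ ρ ρ' : ℝ, 0 ≤ ρ → ρ ≤ ρ' → Real.cosh ρ ≤ Real.cosh ρ' := by
    intro ρ ρ' h h'
    rw [Real.cosh_le_cosh, abs_of_nonneg h, abs_of_nonneg (h.trans h')]
    exact h'
  have hyR2 : yR ≤ 2 := by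
    rw [← hψρ₀]
    simp only [hyR, hψ]
    exact div_le_div_of_nonneg_left hl.le (Real.sqrt_pos.2 (hu ρ₀ hρ₀pos))
      (Real.sqrt_le_sqrt (by linarith [hcosh_mono ρ₀ R hρ₀pos.le hρ₀R.le]))
  -- the map y ↦ arcosh(1 + l²/(2y²)) sends (0, yR] above R
  have harc_ge : ∀ y : ℝ, 0 < y → y ≤ yR → R ≤ _root_.arcosh (1 + l ^ 2 / (2 * y ^ 2)) := by
    intro y hy hyle
    have h2y : (0:ℝ) < 2 * y ^ 2 := by positivity
    have hx1 : (1:ℝ) ≤ 1 + l ^ 2 / (2 * y ^ 2) := by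
      have : 0 ≤ l ^ 2 / (2 * y ^ 2) := by positivity
      linarith
    have hc : Real.cosh (_root_.arcosh (1 + l ^ 2 / (2 * y ^ 2))) = 1 + l ^ 2 / (2 * y ^ 2) :=
      _root_.cosh_arcosh hx1
    by_contra hlt
    push_neg at hlt
    have hstrict : Real.cosh (_root_.arcosh (1 + l ^ 2 / (2 * y ^ 2))) < Real.cosh R := by
      rw [Real.cosh_lt_cosh, abs_of_nonneg (_root_.arcosh_nonneg hx1), abs_of_nonneg hRpos.le]
      exact hlt
    have huR := hu R hRpos
    have hy2 : y ^ 2 ≤ l ^ 2 / (2 * Real.cosh R - 2) := by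
      rw [← hψsq R hRpos]
      exact pow_le_pow_left₀ hy.le hyle 2
    have h3 : y ^ 2 * (2 * Real.cosh R - 2) ≤ l ^ 2 := (le_div_iff₀ huR).1 hy2
    have h4 : Real.cosh R - 1 ≤ l ^ 2 / (2 * y ^ 2) := by
      rw [le_div_iff₀ h2y]; nlinarith
    rw [hc] at hstrict
    linarith
  -- f vanishes on [0, yR]
  have hf0 : Set.EqOn f 0 (Set.uIcc (0:ℝ) yR) := by
    intro y hy
    rw [Set.uIcc_of_le hyRpos.le] at hy
    rcases eq_or_lt_of_le hy.1 with h0 | h0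
    · simp only [hf, Pi.zero_apply, ← h0]
      norm_num
    · have hge := harc_ge y h0 hy.2
      simp only [hf, Pi.zero_apply, hkR _ hge, zero_mul]
  have hfcont : ContinuousOn f {y : ℝ | 0 < y} := by
    intro y hy
    apply ContinuousAt.continuousWithinAt
    exact ((hk.continuousAt).comp (continuousAt_arcosh_comp hl hy)).mul
      (continuousAt_zpow₀ _ _ (Or.inl (ne_of_gt hy)))
  have hint1 : IntervalIntegrable f volume 0 yR :=
    (continuousOn_const.congr hf0).intervalIntegrable
  have hint2 : IntervalIntegrable f volume yR 2 := by
    apply ContinuousOn.intervalIntegrable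
    apply hfcont.mono
    rw [Set.uIcc_of_le hyR2]
    intro y hy
    exact lt_of_lt_of_le hyRpos hy.1
  have hsplit : (∫ y in (0:ℝ)..2, f y) = ∫ y in yR..2, f y := by
    rw [← intervalIntegral.integral_add_adjacent_intervals hint1 hint2,
      intervalIntegral.integral_congr hf0]
    simp
  -- derivative of ψ
  set ψ' : ℝ → ℝ := fun ρ => -(l * Real.sinh ρ) / (Real.sqrt (2 * Real.cosh ρ - 2)) ^ 3
    with hψ'
  have hderiv : ∀ ρ ∈ Set.uIcc ρ₀ R, HasDerivAt ψ (ψ' ρ) ρ := by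
    intro ρ hρ
    rw [Set.uIcc_of_le hρ₀R.le] at hρ
    have hρpos : 0 < ρ := lt_of_lt_of_le hρ₀pos hρ.1
    have huρ := hu ρ hρpos
    have hsq : 0 < Real.sqrt (2 * Real.cosh ρ - 2) := Real.sqrt_pos.2 huρ
    have h1 : HasDerivAt (fun ρ : ℝ => 2 * Real.cosh ρ - 2) (2 * Real.sinh ρ) ρ :=
      ((Real.hasDerivAt_cosh ρ).const_mul 2).sub_const 2
    have h2 : HasDerivAt (fun ρ : ℝ => Real.sqrt (2 * Real.cosh ρ - 2))
        (1 / (2 * Real.sqrt (2 * Real.cosh ρ - 2)) * (2 * Real.sinh ρ)) ρ :=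
      (Real.hasDerivAt_sqrt (ne_of_gt huρ)).comp ρ h1
    have h3 := (hasDerivAt_const ρ l).div h2 (ne_of_gt hsq)
    have husq : Real.sqrt (2 * Real.cosh ρ - 2) ^ 2 = 2 * Real.cosh ρ - 2 :=
      Real.sq_sqrt huρ.le
    refine h3.congr_deriv ?_
    symm
    simp only [hψ']
    field_simp
    ring
  have hψ'cont : ContinuousOn ψ' (Set.uIcc ρ₀ R) := by
    apply ContinuousOn.div (by fun_prop) (by fun_prop)
    intro ρ hρ
    rw [Set.uIcc_of_le hρ₀R.le] at hρ
    have hsq : 0 < Real.sqrt (2 * Real.cosh ρ - 2) :=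
      Real.sqrt_pos.2 (hu ρ (lt_of_lt_of_le hρ₀pos hρ.1))
    positivity
  have himg : ContinuousOn f (ψ '' Set.uIcc ρ₀ R) := by
    apply hfcont.mono
    rintro _ ⟨ρ, hρ, rfl⟩
    rw [Set.uIcc_of_le hρ₀R.le] at hρ
    exact hψpos ρ (lt_of_lt_of_le hρ₀pos hρ.1)
  have hsub := intervalIntegral.integral_comp_smul_deriv' hderiv hψ'cont himg
  -- identify the substituted integrand
  have hEq : Set.EqOn (fun ρ => ψ' ρ • (f ∘ ψ) ρ)
      (fun ρ => -(1 / (Real.sqrt 2 * l) * F ρ)) (Set.uIcc ρ₀ R) := by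
    intro ρ hρ
    rw [Set.uIcc_of_le hρ₀R.le] at hρ
    have hρpos : 0 < ρ := lt_of_lt_of_le hρ₀pos hρ.1
    have huρ := hu ρ hρpos
    have hsq : 0 < Real.sqrt (2 * Real.cosh ρ - 2) := Real.sqrt_pos.2 huρ
    have hψρ := hψpos ρ hρpos
    have harg : 1 + l ^ 2 / (2 * (ψ ρ) ^ 2) = Real.cosh ρ := by
      rw [hψsq ρ hρpos]
      field_simp
      ring
    have hzp : (ψ ρ) ^ (-2 : ℤ) = (2 * Real.cosh ρ - 2) / l ^ 2 := by
      rw [show ((-2 : ℤ)) = -(2 : ℕ) by norm_num, zpow_neg, zpow_natCast,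
        hψsq ρ hρpos, inv_div]
    have hfψ : f (ψ ρ) = k ρ * ((2 * Real.cosh ρ - 2) / l ^ 2) := by
      simp only [hf]
      rw [harg, _root_.arcosh_cosh hρpos.le, hzp]
    have hsqrt2 : Real.sqrt (2 * Real.cosh ρ - 2)
        = Real.sqrt 2 * Real.sqrt (Real.cosh ρ - 1) := by
      rw [show 2 * Real.cosh ρ - 2 = 2 * (Real.cosh ρ - 1) by ring,
        Real.sqrt_mul (by norm_num : (0:ℝ) ≤ 2)]
    have hc1 : 0 < Real.cosh ρ - 1 := by linarith
    have hs1 : 0 < Real.sqrt (Real.cosh ρ - 1) := Real.sqrt_pos.2 hc1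
    have hs2 : (0:ℝ) < Real.sqrt 2 := by positivity
    have husq : Real.sqrt (2 * Real.cosh ρ - 2) ^ 2 = 2 * Real.cosh ρ - 2 :=
      Real.sq_sqrt huρ.le
    have key : ∀ u s a b kk sh : ℝ, 0 < u → 0 < s → 0 < a → 0 < b →
        s = a * b → s ^ 2 = u →
        -(l * sh) / s ^ 3 * (kk * (u / l ^ 2)) = -(1 / (a * l) * (kk * sh / b)) := by
      intro u s a b kk sh hu0 hs0 ha hb hsab hsu
      have h3 : s ^ 3 = u * s := by rw [← hsu]; ring
      rw [h3, hsab]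
      field_simp
    simp only [Function.comp, smul_eq_mul, hψ', hF]
    rw [hfψ]
    exact key (2 * Real.cosh ρ - 2) (Real.sqrt (2 * Real.cosh ρ - 2)) (Real.sqrt 2)
      (Real.sqrt (Real.cosh ρ - 1)) (k ρ) (Real.sinh ρ) huρ hsq hs2 hs1 hsqrt2 husq
  rw [intervalIntegral.integral_congr hEq, hψρ₀] at hsub
  -- hsub : ∫ ρ in ρ₀..R, -(c * F ρ) = ∫ y in 2..yR, f y
  have hIoi : (∫ ρ in Set.Ioi ρ₀, F ρ) = ∫ ρ in ρ₀..R, F ρ := by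
    have h1 : Set.EqOn F (Set.indicator (Set.Ioc ρ₀ R) F) (Set.Ioi ρ₀) := by
      intro ρ hρ
      by_cases hρR : ρ ≤ R
      · rw [Set.indicator_of_mem (Set.mem_Ioc.2 ⟨hρ, hρR⟩)]
      · rw [Set.indicator_of_notMem (fun h => hρR h.2)]
        simp only [hF]
        rw [hkR ρ (le_of_lt (not_le.1 hρR))]
        simp
    rw [MeasureTheory.setIntegral_congr_fun measurableSet_Ioi h1,
      MeasureTheory.setIntegral_indicator measurableSet_Ioc,
      Set.inter_eq_self_of_subset_right Set.Ioc_subset_Ioi_self,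
      intervalIntegral.integral_of_le hρ₀R.le]
  have hneg : (∫ ρ in ρ₀..R, -(1 / (Real.sqrt 2 * l) * F ρ))
      = -(1 / (Real.sqrt 2 * l) * ∫ ρ in ρ₀..R, F ρ) := by
    rw [intervalIntegral.integral_neg, intervalIntegral.integral_const_mul]
  have hsymm : (∫ y in (2:ℝ)..yR, f y) = -∫ y in yR..2, f y :=
    intervalIntegral.integral_symm _ _
  rw [hneg, hsymm] at hsub
  rw [hsplit, hIoi]
  linarith
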